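/- Combining the two inequalities J*_∞(x) ≤ J^M_∞(x) − M + J*_∞(x̃_{T_M}) and J^M_∞(x) ≤ J*_∞(x) − J*_∞(x*_{T_M}) + max(φ(x*_{T_M}), M), and assuming the terminal states x̃_{T_M}, x*_{T_M} tend to 0 as M → 0 with J*_∞ and φ continuous at 0 and vanishing there, we obtain lim_{M→0} J^M_∞(x) = J*_∞(x). -/

import Mathlib

/-- combining the two inequalities yields convergence of the
AC-OCP cost to the infinite-horizon optimal cost as M → 0. -/
theorem stmt_8 {X : Type*} [NormedAddCommGroup X]
    (Jstar : X → ℝ) (φ : X → ℝ) (x : X)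
    (JM : ℝ → ℝ) (xt xsT : ℝ → X)
    -- the two inequalities
    (h1 : ∀ M : ℝ, 0 < M → Jstar x ≤ JM M - M + Jstar (xt M))
    (h2 : ∀ M : ℝ, 0 < M → JM M ≤ Jstar x - Jstar (xsT M) + max (φ (xsT M)) M)
    -- terminal/hitting states lie in Ω_M
    (hmem : ∀ M : ℝ, 0 < M → φ (xt M) ≤ M ∧ φ (xsT M) ≤ M)
    -- terminal/hitting states converge to 0 as M → 0
    (hxt : Filter.Tendsto xt (nhdsWithin (0 : ℝ) (Set.Ioi 0)) (nhds 0))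
    (hxsT : Filter.Tendsto xsT (nhdsWithin (0 : ℝ) (Set.Ioi 0)) (nhds 0))
    (hJcont : ContinuousAt Jstar 0) (hJ0 : Jstar 0 = 0)
    (hφcont : ContinuousAt φ 0) (hφ0 : φ 0 = 0) :
    Filter.Tendsto JM (nhdsWithin (0 : ℝ) (Set.Ioi 0)) (nhds (Jstar x)) := by
  have hid : Filter.Tendsto (fun M : ℝ => M) (nhdsWithin (0 : ℝ) (Set.Ioi 0)) (nhds 0) :=
    Filter.Tendsto.mono_left Filter.tendsto_id nhdsWithin_le_nhds
  have hJt : Filter.Tendsto (fun M => Jstar (xt M)) (nhdsWithin (0 : ℝ) (Set.Ioi 0)) (nhds 0) := by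
    simpa [hJ0, Function.comp_def] using hJcont.tendsto.comp hxt
  have hJs : Filter.Tendsto (fun M => Jstar (xsT M)) (nhdsWithin (0 : ℝ) (Set.Ioi 0)) (nhds 0) := by
    simpa [hJ0, Function.comp_def] using hJcont.tendsto.comp hxsT
  have hφs : Filter.Tendsto (fun M => φ (xsT M)) (nhdsWithin (0 : ℝ) (Set.Ioi 0)) (nhds 0) := by
    simpa [hφ0, Function.comp_def] using hφcont.tendsto.comp hxsT
  have hlo : Filter.Tendsto (fun M => Jstar x + M - Jstar (xt M))
      (nhdsWithin (0 : ℝ) (Set.Ioi 0)) (nhds (Jstar x)) := by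
    have h : Filter.Tendsto (fun M => Jstar x + M - Jstar (xt M))
        (nhdsWithin (0 : ℝ) (Set.Ioi 0)) (nhds (Jstar x + 0 - 0)) :=
      ((tendsto_const_nhds.add hid).sub hJt)
    simpa using h
  have hhi : Filter.Tendsto (fun M => Jstar x - Jstar (xsT M) + max (φ (xsT M)) M)
      (nhdsWithin (0 : ℝ) (Set.Ioi 0)) (nhds (Jstar x)) := by
    have h : Filter.Tendsto (fun M => Jstar x - Jstar (xsT M) + max (φ (xsT M)) M)
        (nhdsWithin (0 : ℝ) (Set.Ioi 0)) (nhds (Jstar x - 0 + max 0 0)) :=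
      (tendsto_const_nhds.sub hJs).add (hφs.max hid)
    simpa using h
  refine tendsto_of_tendsto_of_tendsto_of_le_of_le' hlo hhi ?_ ?_
  · filter_upwards [self_mem_nhdsWithin] with M hM
    have := h1 M hM
    linarith
  · filter_upwards [self_mem_nhdsWithin] with M hM
    exact h2 M hM
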